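/- arXiv:2204.07952 — 2 statements merged into one kernel-verified Lean document; each statement's English description precedes it below -/
import Mathlib

section
/- (Combinatorial counting step in Lemma 5.5) Fix integers N ≥ 2 and m ≥ 1 with 2m ≤ N. Let J^c be the set of tuples (j_1,...,j_{2m}) ∈ {2,...,N}^{2m} such that every value appearing in the tuple appears at least twice. Then the cardinality of J^c is at most 2 (N e)^m e^m m!. -/
open Finset in
/-- Any tuple in which every value appears at least twice has image of size at most `m`,
hence the number of such tuples is at most `(N.choose m) * m ^ (2*m)`. -/
lemma index_tuple_card_le (N m : ℕ) (hm : 1 ≤ m) (hmN : 2 * m ≤ N) :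
    Nat.card {j : Fin (2 * m) → Fin N //
        (∀ k, 1 ≤ (j k : ℕ)) ∧
        ∀ k, 2 ≤ Nat.card {l : Fin (2 * m) // j l = j k}}
      ≤ N.choose m * m ^ (2 * m) := by
  classical
  -- image of each such tuple has card ≤ m
  have himg : ∀ j : Fin (2 * m) → Fin N,
      (∀ k, 2 ≤ Nat.card {l : Fin (2 * m) // j l = j k}) →
      (Finset.univ.image j).card ≤ m := by
    intro j hj
    by_contra hlt
    push_neg at hlt
    have key : 2 * m = ∑ b ∈ Finset.univ.image j,
        (Finset.univ.filter fun a => j a = b).card := by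
      simpa using Finset.card_eq_sum_card_image j (Finset.univ : Finset (Fin (2 * m)))
    have hge : ∀ b ∈ Finset.univ.image j,
        2 ≤ (Finset.univ.filter fun a => j a = b).card := by
      intro b hb
      obtain ⟨k, _, hk⟩ := Finset.mem_image.mp hb
      subst hk
      have := hj k
      rwa [Nat.card_eq_fintype_card, Fintype.card_subtype] at this
    have hsum : 2 * (Finset.univ.image j).card
        ≤ ∑ b ∈ Finset.univ.image j, (Finset.univ.filter fun a => j a = b).card := by
      calc 2 * (Finset.univ.image j).card
          = ∑ _b ∈ Finset.univ.image j, 2 := by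
            rw [Finset.sum_const, smul_eq_mul, mul_comm]
        _ ≤ _ := Finset.sum_le_sum hge
    omega
  -- extend the image to a set of size exactly m
  have hext : ∀ j : Fin (2 * m) → Fin N,
      (∀ k, 2 ≤ Nat.card {l : Fin (2 * m) // j l = j k}) →
      ∃ S : Finset (Fin N), Finset.univ.image j ⊆ S ∧ S.card = m := by
    intro j hj
    obtain ⟨S, hS2, _, hS3⟩ := Finset.exists_subsuperset_card_eq
      (Finset.subset_univ (Finset.univ.image j)) (himg j hj)
      (by simpa using le_trans (by omega) hmN)
    exact ⟨S, hS2, hS3⟩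
  set T := {j : Fin (2 * m) → Fin N //
      (∀ k, 1 ≤ (j k : ℕ)) ∧
      ∀ k, 2 ≤ Nat.card {l : Fin (2 * m) // j l = j k}}
  -- choose such a set for each tuple
  let S : T → Finset (Fin N) := fun j => (hext j.1 j.2.2).choose
  have hSsub : ∀ j : T, Finset.univ.image j.1 ⊆ S j := fun j => (hext j.1 j.2.2).choose_spec.1
  have hScard : ∀ j : T, (S j).card = m := fun j => (hext j.1 j.2.2).choose_spec.2
  -- build the injection
  let F : T → {s : Finset (Fin N) // s.card = m} × (Fin (2 * m) → Fin m) :=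
    fun j => ⟨⟨S j, hScard j⟩, fun k =>
      ((S j).orderIsoOfFin (hScard j)).symm
        ⟨j.1 k, hSsub j (Finset.mem_image_of_mem _ (Finset.mem_univ k))⟩⟩
  have hFinj : Function.Injective F := by
    intro j1 j2 h
    have h1 : S j1 = S j2 := congrArg Subtype.val (congrArg Prod.fst h)
    have h2 := congrArg Prod.snd h
    apply Subtype.ext
    funext k
    have e1 : (((S j1).orderIsoOfFin (hScard j1))
        (((S j1).orderIsoOfFin (hScard j1)).symm
          ⟨j1.1 k, hSsub j1 (Finset.mem_image_of_mem _ (Finset.mem_univ k))⟩) : Fin N)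
        = j1.1 k := by rw [OrderIso.apply_symm_apply]
    have e2 : (((S j2).orderIsoOfFin (hScard j2))
        (((S j2).orderIsoOfFin (hScard j2)).symm
          ⟨j2.1 k, hSsub j2 (Finset.mem_image_of_mem _ (Finset.mem_univ k))⟩) : Fin N)
        = j2.1 k := by rw [OrderIso.apply_symm_apply]
    have hk := congrFun h2 k
    rw [← e1, ← e2]
    -- transport along h1
    revert hk
    simp only [F]
    -- The orderIsoOfFin depends on S j1 / S j2; substitute
    rcases j1 with ⟨f1, p1⟩
    rcases j2 with ⟨f2, p2⟩
    intro hk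
    have : ∀ (s t : Finset (Fin N)) (hs : s.card = m) (ht : t.card = m)
        (hst : s = t) (a b : Fin m), a = b →
        ((s.orderIsoOfFin hs a : Fin N)) = (t.orderIsoOfFin ht b : Fin N) := by
      rintro s t hs ht rfl a b rfl; rfl
    exact this _ _ _ _ h1 _ _ hk
  have := Nat.card_le_card_of_injective F hFinj
  calc Nat.card T ≤ Nat.card ({s : Finset (Fin N) // s.card = m} × (Fin (2 * m) → Fin m)) :=
        this
    _ = N.choose m * m ^ (2 * m) := by
        rw [Nat.card_eq_fintype_card, Fintype.card_prod, Fintype.card_fun]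
        congr 1
        · rw [Fintype.card_finset_len, Fintype.card_fin]
        · rw [Fintype.card_fin, Fintype.card_fin]

/-- Combinatorial counting step in Lemma 5.5: for `2 ≤ N`, `1 ≤ m`, `2m ≤ N`, the number of
tuples `(j_1,…,j_{2m}) ∈ {2,…,N}^{2m}` (encoded as functions `Fin (2m) → Fin N` taking values
of index `≥ 1`) in which every value that appears, appears at least twice, is at most
`2 (Ne)^m e^m m!`. -/
theorem index_tuple_counting (N m : ℕ) (hN : 2 ≤ N) (hm : 1 ≤ m) (hmN : 2 * m ≤ N) :
    (Nat.card {j : Fin (2 * m) → Fin N //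
        (∀ k, 1 ≤ (j k : ℕ)) ∧
        ∀ k, 2 ≤ Nat.card {l : Fin (2 * m) // j l = j k}} : ℝ)
      ≤ 2 * ((N : ℝ) * Real.exp 1) ^ m * Real.exp 1 ^ m * (Nat.factorial m : ℝ) := by
  have hcard := index_tuple_card_le N m hm hmN
  have h1 : (Nat.card {j : Fin (2 * m) → Fin N //
        (∀ k, 1 ≤ (j k : ℕ)) ∧
        ∀ k, 2 ≤ Nat.card {l : Fin (2 * m) // j l = j k}} : ℝ)
      ≤ (N.choose m : ℝ) * (m : ℝ) ^ (2 * m) := by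
    have := Nat.cast_le (α := ℝ) |>.mpr hcard
    push_cast at this
    convert this using 2
  refine h1.trans ?_
  have hfac : (0 : ℝ) < (Nat.factorial m : ℝ) := by positivity
  -- choose bound : N.choose m ≤ N^m / m!
  have hc : (N.choose m : ℝ) ≤ (N : ℝ) ^ m / (Nat.factorial m : ℝ) := by
    exact_mod_cast Nat.choose_le_pow_div m N
  -- Stirling-type : m^m ≤ exp m * m!
  have hs : (m : ℝ) ^ m ≤ Real.exp 1 ^ m * (Nat.factorial m : ℝ) := by
    have := Real.pow_div_factorial_le_exp (x := (m : ℝ)) (by positivity) m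
    rw [div_le_iff₀ hfac] at this
    calc (m : ℝ) ^ m ≤ Real.exp (m : ℝ) * (Nat.factorial m : ℝ) := this
      _ = Real.exp 1 ^ m * (Nat.factorial m : ℝ) := by
          rw [← Real.exp_one_rpow (m : ℝ), Real.rpow_natCast]
  have hm2 : (m : ℝ) ^ (2 * m) = ((m : ℝ) ^ m) ^ 2 := by
    rw [← pow_mul, mul_comm]
  have hNpos : (0 : ℝ) < (N : ℝ) := by positivity
  have hexp : (0 : ℝ) < Real.exp 1 := Real.exp_pos 1
  calc (N.choose m : ℝ) * (m : ℝ) ^ (2 * m)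
      ≤ ((N : ℝ) ^ m / (Nat.factorial m : ℝ)) * ((Real.exp 1 ^ m * (Nat.factorial m : ℝ)) ^ 2) := by
        rw [hm2]
        apply mul_le_mul hc (pow_le_pow_left₀ (by positivity) hs 2) (by positivity) (by positivity)
    _ = (N : ℝ) ^ m * Real.exp 1 ^ m * Real.exp 1 ^ m * (Nat.factorial m : ℝ) := by
        field_simp
    _ ≤ 2 * ((N : ℝ) * Real.exp 1) ^ m * Real.exp 1 ^ m * (Nat.factorial m : ℝ) := by
        rw [mul_pow]
        nlinarith [pow_pos hNpos m, pow_pos hexp m, mul_pos (pow_pos hNpos m) (pow_pos hexp m),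
          mul_pos (mul_pos (pow_pos hNpos m) (pow_pos hexp m)) (pow_pos hexp m)]
end

section
/- (Dimensional bound on entropy) Let E be a measurable space, μ^N a symmetric probability measure on E^N (invariant under permutations of coordinates), and μ a probability measure on E. Then for any 1 ≤ k ≤ N, the relative entropy of the k-fold marginal μ^{N,k} with respect to μ^{⊗k} satisfies H(μ^{N,k} | μ^{⊗k}) ≤ (2k/N) H(μ^N | μ^{⊗N}). -/
open MeasureTheory
open scoped ENNReal Classical

/-- Relative entropy `H(μ|ν) = ∫ log(dμ/dν) dμ` when `μ ≪ ν` and the log-likelihood ratio is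
`μ`-integrable, and `∞` otherwise. -/
noncomputable def relEntropy {E : Type*} [MeasurableSpace E] (μ ν : Measure E) : ℝ≥0∞ :=
  if μ ≪ ν ∧ Integrable (llr μ ν) μ then ENNReal.ofReal (∫ x, llr μ ν x ∂μ) else ∞

section Aux

open Function

lemma ennreal_mul_div_le (a b : ℝ≥0∞) : b * (a / b) ≤ a := by
  rcases eq_or_ne b 0 with rfl | hb0
  · simp
  rcases eq_or_ne b ⊤ with rfl | hbt
  · simp [ENNReal.div_top]
  refine le_of_eq ?_
  calc b * (a / b) = a * (b⁻¹ * b) := by rw [div_eq_mul_inv]; ring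
  _ = a := by rw [ENNReal.inv_mul_cancel hb0 hbt, mul_one]

lemma measurable_comp_right {E : Type*} [MeasurableSpace E] {a b : ℕ} (ι : Fin a → Fin b) :
    Measurable (fun x : Fin b → E => x ∘ ι) :=
  measurable_pi_lambda _ fun i => measurable_pi_apply _

lemma map_pi_comp_injective {E : Type*} [MeasurableSpace E] (μ : Measure E)
    [IsProbabilityMeasure μ] {a b : ℕ} (ι : Fin a → Fin b) (hι : Function.Injective ι) :
    Measure.map (fun x : Fin b → E => x ∘ ι) (Measure.pi fun _ : Fin b => μ)
      = Measure.pi (fun _ : Fin a => μ) := by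
  refine (Measure.pi_eq fun s hs => ?_).symm
  rw [Measure.map_apply (measurable_comp_right ι) (MeasurableSet.univ_pi hs)]
  set t : Fin b → Set E := fun j => ⋂ i, ⋂ (_ : ι i = j), s i with ht
  have hpre : (fun x : Fin b → E => x ∘ ι) ⁻¹' (Set.univ.pi s) = Set.univ.pi t := by
    ext x
    simp only [Set.mem_preimage, Set.mem_pi, Set.mem_univ, forall_true_left, ht,
      Set.mem_iInter, Function.comp]
    constructor
    · intro h j i hij; subst hij; exact h i
    · intro h i; exact h (ι i) i rfl
  rw [hpre, Measure.pi_pi]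
  have htm : ∀ j, μ (t j) = if j ∈ Finset.image ι Finset.univ then μ (t j) else 1 := by
    intro j
    split_ifs with h
    · rfl
    · have : t j = Set.univ := by
        refine Set.eq_univ_of_forall fun x => ?_
        simp only [ht, Set.mem_iInter]
        intro i hij
        exact absurd (Finset.mem_image.2 ⟨i, Finset.mem_univ i, hij⟩) h
      rw [this, measure_univ]
  calc ∏ j, μ (t j) = ∏ j ∈ Finset.image ι Finset.univ, μ (t j) := by
        refine (Finset.prod_subset (Finset.subset_univ _) fun j _ hj => ?_).symm
        rw [htm j, if_neg hj]
    _ = ∏ i, μ (t (ι i)) := Finset.prod_image (fun i _ i' _ h => hι h)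
    _ = ∏ i, μ (s i) := by
        refine Finset.prod_congr rfl fun i _ => ?_
        congr 1
        apply Set.Subset.antisymm
        · intro x hx
          simp only [ht, Set.mem_iInter] at hx
          exact hx i rfl
        · intro x hx
          simp only [ht, Set.mem_iInter]
          intro i' hii'
          rwa [hι hii']

variable {E : Type*} [MeasurableSpace E] (μ : Measure E) [IsProbabilityMeasure μ]

lemma lmarginal_const' {b : ℕ} (s : Finset (Fin b)) (C : ℝ≥0∞) (x : Fin b → E) :
    (∫⋯∫⁻_s, (fun _ => C) ∂(fun _ => μ)) x = C := by
  rw [lmarginal]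
  simp

lemma lmarginal_block {a b : ℕ} (ι : Fin a → Fin b) (hι : Function.Injective ι)
    (f : (Fin a → E) → ℝ≥0∞) (x : Fin b → E) :
    (∫⋯∫⁻_(Finset.image ι Finset.univ), (fun y => f (y ∘ ι)) ∂(fun _ => μ)) x
      = ∫⁻ y, f y ∂(Measure.pi fun _ : Fin a => μ) := by
  set B := Finset.image ι Finset.univ with hB
  have hmem : ∀ i, ι i ∈ B := fun i => Finset.mem_image.2 ⟨i, Finset.mem_univ i, rfl⟩
  let e : Fin a ≃ {j // j ∈ B} :=
    Equiv.ofBijective (fun i => ⟨ι i, hmem i⟩)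
      ⟨fun i i' h => hι (by simpa using congrArg Subtype.val h), by
        rintro ⟨j, hj⟩
        rcases Finset.mem_image.1 hj with ⟨i, -, rfl⟩
        exact ⟨i, rfl⟩⟩
  rw [lmarginal]
  have hmp := measurePreserving_piCongrLeft (fun _ : {j // j ∈ B} => μ) e
  rw [← hmp.map_eq, MeasureTheory.lintegral_map_equiv]
  refine lintegral_congr fun z => ?_
  congr 1
  funext i
  simp only [Function.comp_apply]
  have h1 : updateFinset x B ((MeasurableEquiv.piCongrLeft (fun _ => E) e) z) (ι i)
      = ((MeasurableEquiv.piCongrLeft (fun _ => E) e) z) ⟨ι i, hmem i⟩ := by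
    simp [updateFinset, hmem i]
  rw [h1]
  have h2 : (⟨ι i, hmem i⟩ : {j // j ∈ B}) = e i := rfl
  rw [h2, MeasurableEquiv.coe_piCongrLeft, Equiv.piCongrLeft_apply_apply]

lemma lintegral_pi_prod_blocks [Nonempty E] {a b m : ℕ} (ι : Fin m → Fin a → Fin b)
    (hι : ∀ j, Function.Injective (ι j))
    (hdisj : ∀ j j', j ≠ j' → ∀ i i', ι j i ≠ ι j' i')
    (f : (Fin a → E) → ℝ≥0∞) (hf : Measurable f) :
    ∫⁻ x : Fin b → E, ∏ j, f (x ∘ ι j) ∂(Measure.pi fun _ : Fin b => μ)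
      = (∫⁻ y, f y ∂(Measure.pi fun _ : Fin a => μ)) ^ m := by
  set c := ∫⁻ y, f y ∂(Measure.pi fun _ : Fin a => μ) with hc
  set B : Fin m → Finset (Fin b) := fun j => Finset.image (ι j) Finset.univ with hBdef
  have hmeas1 : ∀ j, Measurable (fun y : Fin b → E => f (y ∘ ι j)) :=
    fun j => hf.comp (measurable_comp_right (ι j))
  have hBdisj : ∀ j j', j ≠ j' → Disjoint (B j) (B j') := by
    intro j j' hjj'
    rw [Finset.disjoint_left]
    rintro x hx hx'
    rcases Finset.mem_image.1 hx with ⟨i, -, rfl⟩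
    rcases Finset.mem_image.1 hx' with ⟨i', -, hi'⟩
    exact hdisj j j' hjj' i i' hi'.symm
  have main : ∀ s : Finset (Fin m), ∀ x : Fin b → E,
      (∫⋯∫⁻_(s.biUnion B), (fun y => ∏ j ∈ s, f (y ∘ ι j)) ∂(fun _ => μ)) x
        = c ^ s.card := by
    intro s
    induction s using Finset.induction_on with
    | empty => intro x; simp
    | @insert j₀ s hj₀ ih =>
      intro x
      have hdisjU : Disjoint (B j₀) (s.biUnion B) := by
        rw [Finset.disjoint_biUnion_right]
        intro j hj
        exact hBdisj j₀ j (fun h => hj₀ (h ▸ hj))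
      have hprodmeas : Measurable (fun y : Fin b → E => ∏ j ∈ insert j₀ s, f (y ∘ ι j)) :=
        Finset.measurable_prod _ fun j _ => hmeas1 j
      rw [Finset.biUnion_insert, lmarginal_union _ _ hprodmeas hdisjU]
      have hinner : (∫⋯∫⁻_(s.biUnion B), (fun y => ∏ j ∈ insert j₀ s, f (y ∘ ι j)) ∂(fun _ => μ))
          = fun x' => f (x' ∘ ι j₀) * c ^ s.card := by
        funext x'
        rw [lmarginal]
        have hre : ∀ y : (i : s.biUnion B) → E,
            (∏ j ∈ insert j₀ s, f ((updateFinset x' (s.biUnion B) y) ∘ ι j))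
              = f (x' ∘ ι j₀) * ∏ j ∈ s, f ((updateFinset x' (s.biUnion B) y) ∘ ι j) := by
          intro y
          rw [Finset.prod_insert hj₀]
          congr 2
          funext i
          have : ι j₀ i ∉ s.biUnion B := by
            intro hmem
            exact (Finset.disjoint_left.1 hdisjU)
              (Finset.mem_image.2 ⟨i, Finset.mem_univ i, rfl⟩) hmem
          simp [updateFinset, this]
        simp_rw [hre]
        rw [lintegral_const_mul _ (show Measurable fun y : (i : (s.biUnion B : Finset (Fin b))) → E
            => ∏ j ∈ s, f ((updateFinset x' (s.biUnion B) y) ∘ ι j) from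
          (Finset.measurable_prod _ fun j _ => hmeas1 j).comp measurable_updateFinset)]
        have := ih x'
        rw [lmarginal] at this
        rw [this]
      rw [hinner]
      have houter : (∫⋯∫⁻_(B j₀), (fun x' => f (x' ∘ ι j₀) * c ^ s.card) ∂(fun _ => μ)) x
          = ((∫⋯∫⁻_(B j₀), (fun x' => f (x' ∘ ι j₀)) ∂(fun _ => μ)) x) * c ^ s.card := by
        rw [lmarginal, lmarginal,
          lintegral_mul_const _ (show Measurable fun y : (i : (B j₀ : Finset (Fin b))) → E
            => f ((updateFinset x (B j₀) y) ∘ ι j₀) from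
          (hmeas1 j₀).comp measurable_updateFinset)]
      rw [houter, lmarginal_block μ (ι j₀) (hι j₀) f x,
        Finset.card_insert_of_notMem hj₀, ← hc, pow_succ, mul_comm]
  obtain ⟨x₀⟩ : Nonempty (Fin b → E) := inferInstance
  rw [lintegral_eq_lmarginal_univ x₀]
  have huniv : (Finset.univ.biUnion B)ᶜ ∪ Finset.univ.biUnion B = Finset.univ := by
    ext j; by_cases h : j ∈ Finset.univ.biUnion B <;> simp [h]
  rw [← huniv, lmarginal_union _ _ (Finset.measurable_prod _ fun j _ => hmeas1 j)
    (disjoint_compl_left)]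
  have h1 : (∫⋯∫⁻_(Finset.univ.biUnion B), (fun y => ∏ j, f (y ∘ ι j)) ∂(fun _ => μ))
      = fun _ => c ^ m := by
    funext x'
    rw [main Finset.univ x', Finset.card_univ, Fintype.card_fin]
  rw [h1, lmarginal_const']

lemma exists_perm_comp {a b : ℕ} (u v : Fin a → Fin b) (hu : Function.Injective u)
    (hv : Function.Injective v) : ∃ σ : Equiv.Perm (Fin b), ∀ i, σ (u i) = v i := by
  have hcard : Fintype.card ↥(Set.range u)ᶜ = Fintype.card ↥(Set.range v)ᶜ := by
    rw [Fintype.card_compl_set, Fintype.card_compl_set,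
      Set.card_range_of_injective hu, Set.card_range_of_injective hv]
  let e₁ : ↥(Set.range u) ≃ ↥(Set.range v) :=
    (Equiv.ofInjective u hu).symm.trans (Equiv.ofInjective v hv)
  let e₂ : ↥(Set.range u)ᶜ ≃ ↥(Set.range v)ᶜ := Fintype.equivOfCardEq hcard
  refine ⟨((Equiv.sumCompl (· ∈ Set.range u)).symm.trans ((e₁.sumCongr e₂).trans
      (Equiv.sumCompl (· ∈ Set.range v)))), fun i => ?_⟩
  simp only [Equiv.trans_apply]
  rw [Equiv.sumCompl_symm_apply_of_pos (p := (· ∈ Set.range u)) (a := u i) ⟨i, rfl⟩]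
  exact (Equiv.sumCompl_apply_inl (p := (· ∈ Set.range v)) (e₁ ⟨u i, ⟨i, rfl⟩⟩)).trans
    (congrArg (fun z => (Equiv.ofInjective v hv z : Fin b)) (Equiv.ofInjective_symm_apply hu i))

lemma lintegral_ofReal_neg_min_llr_le {α : Type*} [MeasurableSpace α] (ρ τ : Measure α)
    [IsProbabilityMeasure ρ] [IsProbabilityMeasure τ] (h : ρ ≪ τ) :
    ∫⁻ x, ENNReal.ofReal (-(min (llr ρ τ x) 0)) ∂ρ ≤ 1 := by
  have hd : Measurable (ρ.rnDeriv τ) := Measure.measurable_rnDeriv ρ τ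
  have hmeas : Measurable fun x => ENNReal.ofReal (-(min (llr ρ τ x) 0)) :=
    (((measurable_llr ρ τ).min measurable_const).neg).ennreal_ofReal
  rw [← MeasureTheory.lintegral_rnDeriv_mul h hmeas.aemeasurable]
  have hb : ∀ᵐ x ∂τ, ρ.rnDeriv τ x * ENNReal.ofReal (-(min (llr ρ τ x) 0)) ≤ 1 := by
    filter_upwards [Measure.rnDeriv_lt_top ρ τ] with x hx
    set d := ρ.rnDeriv τ x with hdx
    set t := d.toReal with htdef
    rcases eq_or_ne d 0 with h0 | h0
    · simp [h0]
    have ht : 0 < t := ENNReal.toReal_pos h0 hx.ne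
    have hllr : llr ρ τ x = Real.log t := rfl
    rcases le_or_gt 1 t with h1 | h1
    · have hmin : min (llr ρ τ x) 0 = 0 := by
        rw [hllr]; exact min_eq_right (Real.log_nonneg h1)
      simp [hmin]
    · have hmin : min (llr ρ τ x) 0 = Real.log t := by
        rw [hllr]; exact min_eq_left (Real.log_neg ht h1).le
      have hlog : -(Real.log t) ≤ 1 / t := by
        have h2 : Real.log t⁻¹ ≤ t⁻¹ - 1 := Real.log_le_sub_one_of_pos (by positivity)
        rw [Real.log_inv] at h2
        rw [one_div]
        linarith
      have hd_eq : d = ENNReal.ofReal t := (ENNReal.ofReal_toReal hx.ne).symm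
      calc d * ENNReal.ofReal (-(min (llr ρ τ x) 0))
          = ENNReal.ofReal t * ENNReal.ofReal (-(Real.log t)) := by rw [hmin, ← hd_eq]
        _ ≤ ENNReal.ofReal t * ENNReal.ofReal (1 / t) :=
            mul_le_mul_right (ENNReal.ofReal_le_ofReal hlog) _
        _ = ENNReal.ofReal (t * (1 / t)) := (ENNReal.ofReal_mul ht.le).symm
        _ = 1 := by rw [mul_one_div, div_self ht.ne', ENNReal.ofReal_one]
  calc ∫⁻ x, ρ.rnDeriv τ x * ENNReal.ofReal (-(min (llr ρ τ x) 0)) ∂τ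
      ≤ ∫⁻ _, 1 ∂τ := lintegral_mono_ae hb
    _ = 1 := by simp

end Aux

/-- Dimensional bound on entropy: if `μ^N` is a symmetric probability measure on `E^N` and
`μ` a probability measure on `E`, then for `1 ≤ k ≤ N` the `k`-fold marginal satisfies
`H(μ^{N,k} | μ^{⊗k}) ≤ (2k/N) H(μ^N | μ^{⊗N})`. -/
theorem entropy_dimension_bound {E : Type*} [MeasurableSpace E]
    (N k : ℕ) (hk : 1 ≤ k) (hkN : k ≤ N)
    (μN : Measure (Fin N → E)) [IsProbabilityMeasure μN]
    (μ : Measure E) [IsProbabilityMeasure μ]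
    (hsym : ∀ σ : Equiv.Perm (Fin N), Measure.map (fun x => x ∘ σ) μN = μN) :
    relEntropy
        (Measure.map (fun (x : Fin N → E) (i : Fin k) => x (Fin.castLE hkN i)) μN)
        (Measure.pi fun _ : Fin k => μ)
      ≤ (2 * k : ℝ≥0∞) / N * relEntropy μN (Measure.pi fun _ : Fin N => μ) := by
  classical
  set νN : Measure (Fin N → E) := Measure.pi fun _ : Fin N => μ with hνN
  set νk : Measure (Fin k → E) := Measure.pi fun _ : Fin k => μ with hνk
  have hN0 : 0 < N := lt_of_lt_of_le hk hkN
  have hk0 : 0 < k := hk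
  -- trivial case
  by_cases hcase : μN ≪ νN ∧ Integrable (llr μN νN) μN
  swap
  · have hrhs : relEntropy μN νN = ∞ := by rw [relEntropy, if_neg hcase]
    rw [hrhs, ENNReal.mul_top]
    · exact le_top
    · refine ENNReal.div_ne_zero.2 ⟨?_, ENNReal.natCast_ne_top N⟩
      exact mul_ne_zero two_ne_zero (Nat.cast_ne_zero.2 (by omega))
  obtain ⟨hac, hint⟩ := hcase
  -- nonemptiness
  have hNE : Nonempty (Fin N → E) := by
    by_contra hne
    rw [not_nonempty_iff] at hne
    have h0 : μN = 0 := μN.eq_zero_of_isEmpty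
    have h1 : (1 : ℝ≥0∞) = 0 := by
      rw [← measure_univ (μ := μN), h0]; simp
    simp at h1
  have hE : Nonempty E := ⟨Classical.choice hNE ⟨0, hN0⟩⟩
  -- blocks
  set m : ℕ := N / k with hmdef
  have hm1 : 1 ≤ m := (Nat.one_le_div_iff hk0).2 hkN
  have hblock : ∀ (j : Fin m) (i : Fin k), (j : ℕ) * k + (i : ℕ) < N := by
    intro j i
    have h1 : (j : ℕ) * k + (i : ℕ) < ((j : ℕ) + 1) * k := by
      rw [add_one_mul]
      exact Nat.add_lt_add_left i.isLt _
    have h2 : ((j : ℕ) + 1) * k ≤ m * k := Nat.mul_le_mul_right k j.isLt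
    have h3 : m * k ≤ N := by rw [hmdef]; exact Nat.div_mul_le_self N k
    omega
  set ι : Fin m → Fin k → Fin N := fun j i => ⟨(j : ℕ) * k + (i : ℕ), hblock j i⟩ with hιdef
  have hιinj : ∀ j, Function.Injective (ι j) := by
    intro j i i' h
    have := congrArg Fin.val h
    simp only [hιdef] at this
    exact Fin.ext (by omega)
  have hιdisj : ∀ j j', j ≠ j' → ∀ i i', ι j i ≠ ι j' i' := by
    intro j j' hjj' i i' h
    have hval := congrArg Fin.val h
    simp only [hιdef] at hval
    apply hjj'
    have hj : ((j : ℕ) * k + (i : ℕ)) / k = (j : ℕ) := by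
      rw [Nat.add_div_eq_of_add_mod_lt]
      · rw [Nat.mul_div_cancel _ hk0, Nat.div_eq_of_lt i.isLt, add_zero]
      · rw [Nat.mul_mod_left, zero_add, Nat.mod_eq_of_lt i.isLt]
        exact i.isLt
    have hj' : ((j' : ℕ) * k + (i' : ℕ)) / k = (j' : ℕ) := by
      rw [Nat.add_div_eq_of_add_mod_lt]
      · rw [Nat.mul_div_cancel _ hk0, Nat.div_eq_of_lt i'.isLt, add_zero]
      · rw [Nat.mul_mod_left, zero_add, Nat.mod_eq_of_lt i'.isLt]
        exact i'.isLt
    exact Fin.ext (by rw [← hj, ← hj', hval])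
  -- the projection
  set u0 : Fin k → Fin N := Fin.castLE hkN with hu0def
  have hu0inj : Function.Injective u0 := Fin.castLE_injective hkN
  set Pk : Measure (Fin k → E) := Measure.map (fun x : Fin N → E => x ∘ u0) μN with hPk
  have hPkprob : IsProbabilityMeasure Pk :=
    Measure.isProbabilityMeasure_map (measurable_comp_right u0).aemeasurable
  -- map identities
  have hmapν : ∀ (w : Fin k → Fin N), Function.Injective w →
      Measure.map (fun x : Fin N → E => x ∘ w) νN = νk :=
    fun w hw => map_pi_comp_injective μ w hw
  have hmapP : ∀ j, Measure.map (fun x : Fin N → E => x ∘ ι j) μN = Pk := by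
    intro j
    obtain ⟨σ, hσ⟩ := exists_perm_comp u0 (ι j) hu0inj (hιinj j)
    have hfun : (fun x : Fin N → E => x ∘ ι j)
        = (fun x : Fin N → E => x ∘ u0) ∘ (fun x : Fin N → E => x ∘ σ) := by
      funext x
      funext i
      simp only [Function.comp_apply]
      exact congrArg x (hσ i).symm
    rw [hfun, ← Measure.map_map (measurable_comp_right u0) (measurable_comp_right σ),
      hsym σ, hPk]
  have hacPk : Pk ≪ νk := by
    rw [hPk, ← hmapν u0 hu0inj]
    exact hac.map (measurable_comp_right u0)
  -- densities
  set g : (Fin N → E) → ℝ≥0∞ := μN.rnDeriv νN with hgdef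
  set f : (Fin k → E) → ℝ≥0∞ := Pk.rnDeriv νk with hfdef
  have hgmeas : Measurable g := Measure.measurable_rnDeriv _ _
  have hfmeas : Measurable f := Measure.measurable_rnDeriv _ _
  set φ : (Fin N → E) → ℝ≥0∞ := fun x => ∏ j, f (x ∘ ι j) with hφdef
  have hφmeas : Measurable φ :=
    Finset.measurable_prod _ fun j _ => hfmeas.comp (measurable_comp_right (ι j))
  have hφint : ∫⁻ x, φ x ∂νN = 1 := by
    rw [hφdef]
    rw [lintegral_pi_prod_blocks μ ι hιinj hιdisj f hfmeas]
    rw [← hνk, Measure.lintegral_rnDeriv hacPk, measure_univ, one_pow]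
  -- key quotient bound
  have hΦg : ∫⁻ x, φ x / g x ∂μN ≤ 1 := by
    rw [← Measure.withDensity_rnDeriv_eq μN νN hac,
      lintegral_withDensity_eq_lintegral_mul νN hgmeas
        (show Measurable (fun x => φ x / g x) from hφmeas.div hgmeas)]
    calc ∫⁻ x, (g * fun x => φ x / g x) x ∂νN ≤ ∫⁻ x, φ x ∂νN :=
          lintegral_mono fun x => ennreal_mul_div_le _ _
      _ = 1 := hφint
  -- a.e. positivity/finiteness
  have hae_g_pos : ∀ᵐ x ∂μN, 0 < g x := Measure.rnDeriv_pos hac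
  have hae_g_fin : ∀ᵐ x ∂μN, g x < ∞ :=
    (Measure.rnDeriv_lt_top μN νN).filter_mono hac.ae_le
  have hae_f_pos : ∀ᵐ x ∂μN, ∀ j, 0 < f (x ∘ ι j) := by
    rw [ae_all_iff]
    intro j
    have h1 : ∀ᵐ y ∂Pk, 0 < f y := Measure.rnDeriv_pos hacPk
    rw [← hmapP j] at h1
    exact (ae_map_iff (measurable_comp_right (ι j)).aemeasurable
      (measurableSet_lt measurable_const hfmeas)).1 h1
  have hae_f_fin : ∀ᵐ x ∂μN, ∀ j, f (x ∘ ι j) < ∞ := by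
    rw [ae_all_iff]
    intro j
    have h1 : ∀ᵐ y ∂Pk, f y < ∞ :=
      (Measure.rnDeriv_lt_top Pk νk).filter_mono hacPk.ae_le
    rw [← hmapP j] at h1
    exact (ae_map_iff (measurable_comp_right (ι j)).aemeasurable
      (measurableSet_lt hfmeas measurable_const)).1 h1
  -- notation for llr
  set L : (Fin N → E) → ℝ := llr μN νN with hLdef
  set Lk : (Fin k → E) → ℝ := llr Pk νk with hLkdef
  have hLkmeas : Measurable Lk := measurable_llr _ _
  set W : (Fin N → E) → ℝ := fun x => ∑ j, Lk (x ∘ ι j) with hWdef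
  -- pointwise inequality
  have hptwise : ∀ᵐ x ∂μN, W x - L x ≤ (φ x / g x).toReal - 1 := by
    filter_upwards [hae_g_pos, hae_g_fin, hae_f_pos, hae_f_fin] with x hg0 hgt hf0 hft
    have htg : 0 < (g x).toReal := ENNReal.toReal_pos hg0.ne' hgt.ne
    have htf : ∀ j : Fin m, 0 < (f (x ∘ ι j)).toReal :=
      fun j => ENNReal.toReal_pos (hf0 j).ne' (hft j).ne
    have hW : W x = Real.log (∏ j, (f (x ∘ ι j)).toReal) :=
      (Real.log_prod fun j _ => (htf j).ne').symm
    have hL : L x = Real.log (g x).toReal := rfl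
    have hprodpos : 0 < ∏ j, (f (x ∘ ι j)).toReal := Finset.prod_pos fun j _ => htf j
    have heq : W x - L x = Real.log ((∏ j, (f (x ∘ ι j)).toReal) / (g x).toReal) := by
      rw [hW, hL, Real.log_div hprodpos.ne' htg.ne']
    have heq2 : (∏ j, (f (x ∘ ι j)).toReal) / (g x).toReal = (φ x / g x).toReal := by
      rw [hφdef, ENNReal.toReal_div, ENNReal.toReal_prod]
    rw [heq, heq2]
    exact Real.log_le_sub_one_of_pos (heq2 ▸ (div_pos hprodpos htg))
  -- integrability of Lk ∘ blocks
  have hmapmeas : ∀ j, Measurable (fun x : Fin N → E => x ∘ ι j) :=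
    fun j => measurable_comp_right (ι j)
  have hneg : ∀ j, ∫⁻ x, ENNReal.ofReal (-(min (Lk (x ∘ ι j)) 0)) ∂μN ≤ 1 := by
    intro j
    rw [← lintegral_map (show Measurable (fun y => ENNReal.ofReal (-(min (Lk y) 0))) from
        ((hLkmeas.min measurable_const).neg).ennreal_ofReal) (hmapmeas j),
      hmapP j]
    exact lintegral_ofReal_neg_min_llr_le Pk νk hacPk
  set j₀ : Fin m := ⟨0, hm1⟩ with hj₀def
  -- positive part bound
  have hLfin : ∫⁻ x, ENNReal.ofReal (max (L x) 0) ∂μN < ∞ := by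
    have hb : ∀ x, ENNReal.ofReal (max (L x) 0) ≤ (‖L x‖₊ : ℝ≥0∞) := by
      intro x
      rw [← enorm_eq_nnnorm, Real.enorm_eq_ofReal_abs]
      exact ENNReal.ofReal_le_ofReal (max_le (le_abs_self _) (abs_nonneg _))
    calc ∫⁻ x, ENNReal.ofReal (max (L x) 0) ∂μN ≤ ∫⁻ x, (‖L x‖₊ : ℝ≥0∞) ∂μN :=
          lintegral_mono hb
      _ < ∞ := hint.2
  have hpos : ∫⁻ y, ENNReal.ofReal (max (Lk y) 0) ∂Pk < ∞ := by
    rw [← hmapP j₀, lintegral_map ((hLkmeas.max measurable_const).ennreal_ofReal) (hmapmeas j₀)]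
    have hptbound : ∀ᵐ x ∂μN, ENNReal.ofReal (max (Lk (x ∘ ι j₀)) 0)
        ≤ ENNReal.ofReal (max (L x) 0) + φ x / g x
          + ∑ j, ENNReal.ofReal (-(min (Lk (x ∘ ι j)) 0)) := by
      filter_upwards [hptwise] with x hx
      have h1 : Lk (x ∘ ι j₀) ≤ W x + ∑ j, (-(min (Lk (x ∘ ι j)) 0)) := by
        rw [hWdef]
        have : ∀ j : Fin m, -(-(min (Lk (x ∘ ι j)) 0)) ≤ Lk (x ∘ ι j) := by
          intro j; simp [min_le_left]
        have hsum : Lk (x ∘ ι j₀) = ∑ j, Lk (x ∘ ι j) - ∑ j ∈ Finset.univ.erase j₀,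
            Lk (x ∘ ι j) := by
          rw [← Finset.add_sum_erase _ _ (Finset.mem_univ j₀)]
          ring
        rw [hsum]
        have hbound : ∀ j ∈ Finset.univ.erase j₀, -(-(min (Lk (x ∘ ι j)) 0)) ≤ Lk (x ∘ ι j) :=
          fun j _ => this j
        have h2 : -∑ j ∈ Finset.univ.erase j₀, Lk (x ∘ ι j)
            ≤ ∑ j ∈ Finset.univ.erase j₀, (-(min (Lk (x ∘ ι j)) 0)) := by
          rw [← Finset.sum_neg_distrib]
          exact Finset.sum_le_sum fun j hj => by
            have := min_le_left (Lk (x ∘ ι j)) 0; linarith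
        have h3 : ∑ j ∈ Finset.univ.erase j₀, (-(min (Lk (x ∘ ι j)) 0))
            ≤ ∑ j, (-(min (Lk (x ∘ ι j)) 0)) := by
          refine Finset.sum_le_sum_of_subset_of_nonneg (Finset.erase_subset _ _) ?_
          intro j _ _
          simp [min_le_right]
        linarith
      have h2 : W x ≤ max (L x) 0 + (φ x / g x).toReal := by
        have := le_max_left (L x) 0
        have h0 : (0:ℝ) ≤ (φ x / g x).toReal := ENNReal.toReal_nonneg
        linarith
      have h3 : max (Lk (x ∘ ι j₀)) 0 ≤ max (L x) 0 + (φ x / g x).toReal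
          + ∑ j, (-(min (Lk (x ∘ ι j)) 0)) := by
        have hnn : (0:ℝ) ≤ max (L x) 0 + (φ x / g x).toReal
            + ∑ j, (-(min (Lk (x ∘ ι j)) 0)) := by
          have h4 : (0:ℝ) ≤ ∑ j, (-(min (Lk (x ∘ ι j)) 0)) :=
            Finset.sum_nonneg fun j _ => by simp [min_le_right]
          have h5 : (0:ℝ) ≤ max (L x) 0 := le_max_right _ _
          have h6 : (0:ℝ) ≤ (φ x / g x).toReal := ENNReal.toReal_nonneg
          linarith
        rw [max_le_iff]
        exact ⟨by linarith, hnn⟩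
      calc ENNReal.ofReal (max (Lk (x ∘ ι j₀)) 0)
          ≤ ENNReal.ofReal (max (L x) 0 + (φ x / g x).toReal
              + ∑ j, (-(min (Lk (x ∘ ι j)) 0))) := ENNReal.ofReal_le_ofReal h3
        _ ≤ ENNReal.ofReal (max (L x) 0 + (φ x / g x).toReal)
              + ENNReal.ofReal (∑ j, (-(min (Lk (x ∘ ι j)) 0))) := ENNReal.ofReal_add_le
        _ ≤ ENNReal.ofReal (max (L x) 0) + ENNReal.ofReal ((φ x / g x).toReal)
              + ENNReal.ofReal (∑ j, (-(min (Lk (x ∘ ι j)) 0))) :=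
            add_le_add_left ENNReal.ofReal_add_le _
        _ ≤ ENNReal.ofReal (max (L x) 0) + φ x / g x
              + ∑ j, ENNReal.ofReal (-(min (Lk (x ∘ ι j)) 0)) := by
            refine add_le_add (add_le_add_right ENNReal.ofReal_toReal_le _) ?_
            exact (ENNReal.ofReal_sum_of_nonneg (fun j _ => by simp [min_le_right])).le
    calc ∫⁻ x, ENNReal.ofReal (max (Lk (x ∘ ι j₀)) 0) ∂μN
        ≤ ∫⁻ x, (ENNReal.ofReal (max (L x) 0) + φ x / g x
            + ∑ j, ENNReal.ofReal (-(min (Lk (x ∘ ι j)) 0))) ∂μN := lintegral_mono_ae hptbound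
      _ = ∫⁻ x, ENNReal.ofReal (max (L x) 0) ∂μN + ∫⁻ x, (φ x / g x) ∂μN
            + ∑ j, ∫⁻ x, ENNReal.ofReal (-(min (Lk (x ∘ ι j)) 0)) ∂μN := by
          rw [lintegral_add_left (show Measurable fun x : Fin N → E =>
              ENNReal.ofReal (max (L x) 0) + φ x / g x from
            (((measurable_llr _ _).max measurable_const).ennreal_ofReal).add
              (hφmeas.div hgmeas))]
          rw [lintegral_add_left (((measurable_llr μN νN).max measurable_const).ennreal_ofReal)]
          rw [lintegral_finset_sum _ (fun j (_ : j ∈ Finset.univ) =>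
            show Measurable fun x : Fin N → E => ENNReal.ofReal (-(min (Lk (x ∘ ι j)) 0)) from
            (((hLkmeas.comp (hmapmeas j)).min measurable_const).neg).ennreal_ofReal)]
      _ < ∞ := by
          have hsum : ∑ j : Fin m, ∫⁻ x, ENNReal.ofReal (-(min (Lk (x ∘ ι j)) 0)) ∂μN
              ≤ ∑ _j : Fin m, (1 : ℝ≥0∞) := Finset.sum_le_sum fun j _ => hneg j
          have : ∑ _j : Fin m, (1 : ℝ≥0∞) = (m : ℝ≥0∞) := by simp
          refine ENNReal.add_lt_top.2 ⟨ENNReal.add_lt_top.2 ⟨hLfin, ?_⟩, ?_⟩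
          · exact lt_of_le_of_lt hΦg ENNReal.one_lt_top
          · exact lt_of_le_of_lt (le_trans hsum this.le) (ENNReal.natCast_lt_top m)
  have hintLk : Integrable Lk Pk := by
    refine ⟨(stronglyMeasurable_llr _ _).aestronglyMeasurable, ?_⟩
    rw [hasFiniteIntegral_iff_norm]
    have hb : ∀ y, ENNReal.ofReal ‖Lk y‖
        ≤ ENNReal.ofReal (max (Lk y) 0) + ENNReal.ofReal (-(min (Lk y) 0)) := by
      intro y
      rw [← ENNReal.ofReal_add (le_max_right _ _) (by simp [min_le_right])]
      refine ENNReal.ofReal_le_ofReal ?_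
      rw [Real.norm_eq_abs]
      rcases le_or_gt 0 (Lk y) with h | h
      · rw [abs_of_nonneg h, max_eq_left h, min_eq_right h]; simp
      · rw [abs_of_neg h, max_eq_right h.le, min_eq_left h.le]; simp
    calc ∫⁻ y, ENNReal.ofReal ‖Lk y‖ ∂Pk
        ≤ ∫⁻ y, (ENNReal.ofReal (max (Lk y) 0) + ENNReal.ofReal (-(min (Lk y) 0))) ∂Pk :=
          lintegral_mono hb
      _ = ∫⁻ y, ENNReal.ofReal (max (Lk y) 0) ∂Pk
            + ∫⁻ y, ENNReal.ofReal (-(min (Lk y) 0)) ∂Pk :=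
          lintegral_add_left ((hLkmeas.max measurable_const).ennreal_ofReal) _
      _ < ∞ := ENNReal.add_lt_top.2 ⟨hpos,
          lt_of_le_of_lt (lintegral_ofReal_neg_min_llr_le Pk νk hacPk) ENNReal.one_lt_top⟩
  have hintLj : ∀ j, Integrable (fun x => Lk (x ∘ ι j)) μN := by
    intro j
    have h1 : Integrable Lk (Measure.map (fun x : Fin N → E => x ∘ ι j) μN) := by
      rw [hmapP j]; exact hintLk
    exact (integrable_map_measure h1.1 (hmapmeas j).aemeasurable).1 h1
  have hintW : Integrable W μN := integrable_finset_sum _ fun j _ => hintLj j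
  -- identify integrals
  set Ik : ℝ := ∫ y, Lk y ∂Pk with hIkdef
  set IN : ℝ := ∫ x, L x ∂μN with hINdef
  have hIW : ∫ x, W x ∂μN = m * Ik := by
    rw [hWdef, integral_finset_sum _ fun j _ => hintLj j]
    have : ∀ j : Fin m, ∫ x, Lk (x ∘ ι j) ∂μN = Ik := by
      intro j
      rw [hIkdef, ← hmapP j, integral_map (hmapmeas j).aemeasurable
        ((stronglyMeasurable_llr _ _).aestronglyMeasurable.mono_measure le_rfl)]
    simp_rw [this]
    rw [Finset.sum_const, Finset.card_univ, Fintype.card_fin, nsmul_eq_mul]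
  -- main inequality : m * Ik ≤ IN
  have hmain : (m : ℝ) * Ik ≤ IN := by
    have hD : Integrable (fun x => W x - L x) μN := hintW.sub hint
    have hDp : Integrable (fun x => max (W x - L x + 1) 0) μN :=
      ((hD.add (integrable_const 1)).pos_part)
    have h1 : ∫ x, (W x - L x) ∂μN + 1 ≤ 1 := by
      have hstep1 : ∫ x, (W x - L x) ∂μN + 1 = ∫ x, (W x - L x + 1) ∂μN := by
        rw [integral_add hD (integrable_const 1), integral_const]
        simp
      have hstep2 : ∫ x, (W x - L x + 1) ∂μN ≤ ∫ x, max (W x - L x + 1) 0 ∂μN :=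
        integral_mono (hD.add (integrable_const 1)) hDp fun x => le_max_left _ _
      have hstep3 : ∫ x, max (W x - L x + 1) 0 ∂μN
          = (∫⁻ x, ENNReal.ofReal (max (W x - L x + 1) 0) ∂μN).toReal :=
        integral_eq_lintegral_of_nonneg_ae
          (Filter.Eventually.of_forall fun x => le_max_right _ _) hDp.1
      have hstep4 : ∫⁻ x, ENNReal.ofReal (max (W x - L x + 1) 0) ∂μN ≤ 1 := by
        refine le_trans (lintegral_mono_ae ?_) hΦg
        filter_upwards [hptwise] with x hx
        have h2 : max (W x - L x + 1) 0 ≤ (φ x / g x).toReal := by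
          rw [max_le_iff]
          exact ⟨by linarith, ENNReal.toReal_nonneg⟩
        exact le_trans (ENNReal.ofReal_le_ofReal h2) ENNReal.ofReal_toReal_le
      have hstep5 : (∫⁻ x, ENNReal.ofReal (max (W x - L x + 1) 0) ∂μN).toReal ≤ 1 := by
        have := ENNReal.toReal_mono ENNReal.one_ne_top hstep4
        simpa using this
      linarith
    have h2 : ∫ x, (W x - L x) ∂μN = m * Ik - IN := by
      rw [integral_sub hintW hint, hIW]
    linarith
  -- unfold relEntropy
  have hLHS : relEntropy Pk νk = ENNReal.ofReal Ik := by
    rw [relEntropy, if_pos ⟨hacPk, hintLk⟩]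
  have hRHS : relEntropy μN νN = ENNReal.ofReal IN := by
    rw [relEntropy, if_pos ⟨hac, hint⟩]
  show relEntropy Pk νk ≤ (2 * (k : ℝ≥0∞)) / N * relEntropy μN νN
  rw [hLHS, hRHS]
  -- final arithmetic
  have hm0 : (0:ℝ) < m := by exact_mod_cast hm1
  have hIkle : Ik ≤ IN / m := by
    rw [le_div_iff₀ hm0]
    linarith [hmain]
  have hN2km : N ≤ 2 * k * m := by
    have h1 := Nat.div_add_mod N k
    have h2 : N % k < k := Nat.mod_lt N hk0
    have h3 : 1 ≤ m := hm1
    rw [hmdef] at *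
    nlinarith [Nat.div_add_mod N k, Nat.mod_lt N hk0]
  calc ENNReal.ofReal Ik ≤ ENNReal.ofReal (IN / m) := ENNReal.ofReal_le_ofReal hIkle
    _ = ENNReal.ofReal IN / ENNReal.ofReal m := ENNReal.ofReal_div_of_pos hm0
    _ = ENNReal.ofReal IN / (m : ℝ≥0∞) := by rw [ENNReal.ofReal_natCast]
    _ ≤ (2 * (k : ℝ≥0∞)) / N * ENNReal.ofReal IN := by
      have hmne0 : (m : ℝ≥0∞) ≠ 0 := Nat.cast_ne_zero.2 (by omega)
      have hmnetop : (m : ℝ≥0∞) ≠ ∞ := ENNReal.natCast_ne_top m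
      have hNne0 : (N : ℝ≥0∞) ≠ 0 := Nat.cast_ne_zero.2 (by omega)
      have hinv : (m : ℝ≥0∞)⁻¹ ≤ 2 * (k : ℝ≥0∞) / N := by
        rw [ENNReal.le_div_iff_mul_le (Or.inl hNne0) (Or.inl (ENNReal.natCast_ne_top N))]
        calc (m : ℝ≥0∞)⁻¹ * N ≤ (m : ℝ≥0∞)⁻¹ * ((2 * k * m : ℕ) : ℝ≥0∞) :=
              mul_le_mul_right (Nat.cast_le.2 hN2km) _
          _ = 2 * (k : ℝ≥0∞) * ((m : ℝ≥0∞)⁻¹ * m) := by push_cast; ring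
          _ = 2 * (k : ℝ≥0∞) := by rw [ENNReal.inv_mul_cancel hmne0 hmnetop, mul_one]
      calc ENNReal.ofReal IN / (m : ℝ≥0∞)
          = ENNReal.ofReal IN * (m : ℝ≥0∞)⁻¹ := div_eq_mul_inv _ _
        _ ≤ ENNReal.ofReal IN * (2 * (k : ℝ≥0∞) / N) := mul_le_mul_right hinv _
        _ = 2 * (k : ℝ≥0∞) / N * ENNReal.ofReal IN := mul_comm _ _
end
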